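/- In the sublevel-set setting, assume (a), (b) and (c). Then the set-valued map C(t) = ∩_{i=1}^m {x ∈ H : g_i(t,x) ≤ 0} satisfies condition (H4). -/

import Mathlib

open Set Metric
open scoped Pointwise RealInnerProductSpace

/-- Condition (H4) with constants `r, L`. -/
def CondH4 {H : Type*} [NormedAddCommGroup H] [InnerProductSpace ℝ H]
    (T : ℝ) (C : ℝ → Set H) (r L : ℝ) : Prop :=
  ∀ t ∈ Icc (0:ℝ) T, ∀ x ∈ frontier (C t), ∃ z : H,
    convexHull ℝ ({x} ∪ ball z (2 * r)) ⊆ C t ∧ ‖z - x‖ ≤ L * r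

/-- The moving set given as a finite intersection of sublevel sets. -/
def Csub {E : Type*} {m : ℕ} (g : Fin m → ℝ → E → ℝ) (t : ℝ) : Set E :=
  {x | ∀ i, g i t x ≤ 0}

/-- The set of `ε`-active indices at `(t, x)`. -/
def Iactive {E : Type*} {m : ℕ} (g : Fin m → ℝ → E → ℝ) (ε t : ℝ) (x : E) :
    Set (Fin m) :=
  {i | -ε ≤ g i t x ∧ g i t x ≤ 0}

lemma inner_gradient_eq_fderiv' {E : Type*} [NormedAddCommGroup E] [InnerProductSpace ℝ E]
    [CompleteSpace E] (f : E → ℝ) (p u : E) :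
    ⟪gradient f p, u⟫ = fderiv ℝ f p u := by
  unfold gradient
  exact InnerProductSpace.toDual_symm_apply

lemma norm_gradient_eq_fderiv' {E : Type*} [NormedAddCommGroup E] [InnerProductSpace ℝ E]
    [CompleteSpace E] (f : E → ℝ) (p : E) :
    ‖gradient f p‖ = ‖fderiv ℝ f p‖ := by
  unfold gradient
  exact LinearIsometryEquiv.norm_map _ _

/-- The descent lemma along a segment, for a function with Lipschitz-type gradient bound. -/
lemma descent_lemma' {E : Type*} [NormedAddCommGroup E] [InnerProductSpace ℝ E] [CompleteSpace E]
    (f : E → ℝ) (hf : ∀ p, DifferentiableAt ℝ f p) (x u : E) (L : ℝ)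
    (hlip : ∀ s ∈ Icc (0:ℝ) 1, ‖gradient f (x + s • u) - gradient f x‖ ≤ L * ‖s • u‖) :
    f (x + u) ≤ f x + ⟪gradient f x, u⟫ + L / 2 * ‖u‖ ^ 2 := by
  set c1 : ℝ := ⟪gradient f x, u⟫ with hc1
  set c2 : ℝ := L / 2 * ‖u‖ ^ 2 with hc2
  set F : ℝ → ℝ := fun s => f (x + s • u) - s * c1 - s ^ 2 * c2 with hFdef
  have hderiv : ∀ s : ℝ, HasDerivAt F (⟪gradient f (x + s • u), u⟫ - c1 - 2 * s * c2) s := by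
    intro s
    have hc : HasDerivAt (fun s : ℝ => x + s • u) u s := by
      simpa using ((hasDerivAt_id s).smul_const u).const_add x
    have h1 : HasDerivAt (fun s : ℝ => f (x + s • u)) (fderiv ℝ f (x + s • u) u) s :=
      (hf _).hasFDerivAt.comp_hasDerivAt s hc
    rw [← inner_gradient_eq_fderiv'] at h1
    have h2 : HasDerivAt (fun s : ℝ => s * c1) c1 s := by
      simpa using (hasDerivAt_id s).mul_const c1
    have h3 : HasDerivAt (fun s : ℝ => s ^ 2 * c2) (2 * s * c2) s := by
      have := (hasDerivAt_pow 2 s).mul_const c2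
      simpa using this
    exact (h1.sub h2).sub h3
  have hF' : AntitoneOn F (Icc 0 1) := by
    apply antitoneOn_of_deriv_nonpos (convex_Icc 0 1)
    · exact fun s _ => (hderiv s).differentiableAt.continuousAt.continuousWithinAt
    · exact fun s hs => (hderiv s).differentiableAt.differentiableWithinAt
    · intro s hs
      rw [interior_Icc] at hs
      rw [(hderiv s).deriv]
      have h1 : ⟪gradient f (x + s • u) - gradient f x, u⟫ ≤ L * (s * ‖u‖ ^ 2) := by
        calc ⟪gradient f (x + s • u) - gradient f x, u⟫
            ≤ ‖gradient f (x + s • u) - gradient f x‖ * ‖u‖ := real_inner_le_norm _ _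
          _ ≤ L * ‖s • u‖ * ‖u‖ :=
              mul_le_mul_of_nonneg_right (hlip s ⟨hs.1.le, hs.2.le⟩) (norm_nonneg u)
          _ = L * (s * ‖u‖ ^ 2) := by
              rw [norm_smul, Real.norm_eq_abs, abs_of_pos hs.1]; ring
      rw [inner_sub_left] at h1
      have : (2:ℝ) * s * c2 = L * (s * ‖u‖ ^ 2) := by rw [hc2]; ring
      rw [this]
      linarith
  have h01 : F 1 ≤ F 0 := hF' (left_mem_Icc.2 zero_le_one) (right_mem_Icc.2 zero_le_one)
    zero_le_one
  have hF1 : F 1 = f (x + u) - c1 - c2 := by simp [hFdef]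
  have hF0 : F 0 = f x := by simp [hFdef]
  rw [hF1, hF0] at h01
  linarith

set_option maxHeartbeats 4000000 in
theorem stmt12 (d m : ℕ) (T : ℝ) (hT : 0 < T)
    (g : Fin m → ℝ → EuclideanSpace ℝ (Fin d) → ℝ)
    (hdiff : ∀ i, ∀ t ∈ Icc (0:ℝ) T, ∀ x, DifferentiableAt ℝ (g i t) x)
    -- assumption (a)
    (ε : ℝ) (hε : 0 < ε)
    (hQbdd : Bornology.IsBounded {p : ℝ × EuclideanSpace ℝ (Fin d) |
      p.1 ∈ Icc (0:ℝ) T ∧ p.2 ∈ Csub g p.1 ∧ (Iactive g ε p.1 p.2).Nonempty})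
    (hPLI : ∀ t ∈ Icc (0:ℝ) T, ∀ x ∈ Csub g t, (Iactive g ε t x).Nonempty →
      ∀ α : Fin m → ℝ, (∀ i, 0 ≤ α i) → (∀ i, i ∉ Iactive g ε t x → α i = 0) →
        ∑ i, α i • gradient (g i t) x = 0 → ∀ i, α i = 0)
    -- assumption (b)
    (hg_cont : ∀ i, ContinuousOn (fun p : ℝ × EuclideanSpace ℝ (Fin d) => g i p.1 p.2)
      (Icc (0:ℝ) T ×ˢ univ))
    (hgrad_cont : ∀ i, ContinuousOn
      (fun p : ℝ × EuclideanSpace ℝ (Fin d) => gradient (g i p.1) p.2)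
      (Icc (0:ℝ) T ×ˢ univ))
    (hequi : ∀ ε' > 0, ∃ δ > 0, ∀ i, ∀ x : EuclideanSpace ℝ (Fin d),
      ∀ s ∈ Icc (0:ℝ) T, ∀ t ∈ Icc (0:ℝ) T, |s - t| < δ → |g i s x - g i t x| < ε')
    -- assumption (c)
    (hLip : ∃ L > 0, ∃ η > 0, ∀ t ∈ Icc (0:ℝ) T, ∀ i,
      ∀ x ∈ Csub g t + closedBall (0 : EuclideanSpace ℝ (Fin d)) η,
      ∀ y ∈ Csub g t + closedBall (0 : EuclideanSpace ℝ (Fin d)) η,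
        ‖gradient (g i t) x - gradient (g i t) y‖ ≤ L * ‖x - y‖) :
    ∃ r > 0, ∃ L > 0, CondH4 T (Csub g) r L := by
  classical
  -- Gordan-type lemma from positive linear independence
  have gordan : ∀ t ∈ Icc (0:ℝ) T, ∀ x ∈ Csub g t, (Iactive g ε t x).Nonempty →
      ∃ v : EuclideanSpace ℝ (Fin d), ‖v‖ ≤ 1 ∧
        ∀ i ∈ Iactive g ε t x, ⟪gradient (g i t) x, v⟫ < 0 := by
    intro t ht x hx hne
    set S : Set (EuclideanSpace ℝ (Fin d)) :=
      (fun i => gradient (g i t) x) '' (Iactive g ε t x) with hS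
    have hSfin : S.Finite := (Set.toFinite _).image _
    have hSne : S.Nonempty := hne.image _
    have h0 : (0 : EuclideanSpace ℝ (Fin d)) ∉ convexHull ℝ S := by
      intro h0
      rw [mem_convexHull_iff_exists_fintype] at h0
      obtain ⟨ι, hι, w, zf, hw0, hw1, hzS, hsum⟩ := h0
      simp only [hS, Set.mem_image] at hzS
      choose p hp hpz using hzS
      set α : Fin m → ℝ := fun i => ∑ j, if p j = i then w j else 0 with hα
      have hα0 : ∀ i, 0 ≤ α i := fun i =>
        Finset.sum_nonneg fun j _ => by by_cases h : p j = i <;> simp [h, hw0 j]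
      have hsupp : ∀ i, i ∉ Iactive g ε t x → α i = 0 := by
        intro i hi
        refine Finset.sum_eq_zero fun j _ => ?_
        rcases eq_or_ne (p j) i with h | h
        · exact absurd (h ▸ hp j) hi
        · simp [h]
      have hswap : ∑ i, α i • gradient (g i t) x = ∑ j, w j • zf j := by
        simp only [hα, Finset.sum_smul]
        rw [Finset.sum_comm]
        refine Finset.sum_congr rfl fun j _ => ?_
        rw [← hpz j]
        simp [ite_smul]
      have htot : ∑ i, α i = 1 := by
        simp only [hα]
        rw [Finset.sum_comm]
        simpa using hw1
      have hz := hPLI t ht x hx hne α hα0 hsupp (hswap.trans hsum)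
      have : (1:ℝ) = 0 := by
        rw [← htot]
        exact Finset.sum_eq_zero fun i _ => hz i
      norm_num at this
    have hclosed : IsClosed (convexHull ℝ S) := (hSfin.isCompact_convexHull (𝕜 := ℝ)).isClosed
    obtain ⟨fl, u0, hfu, hub⟩ :=
      geometric_hahn_banach_point_closed (convex_convexHull ℝ S) hclosed h0
    rw [map_zero] at hfu
    set wv : EuclideanSpace ℝ (Fin d) := (InnerProductSpace.toDual ℝ _).symm fl with hwv
    have hwapp : ∀ b, ⟪wv, b⟫ = fl b := fun b => InnerProductSpace.toDual_symm_apply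
    have hwv0 : wv ≠ 0 := by
      obtain ⟨b, hb⟩ := hSne
      intro h
      have h2 := hub b (subset_convexHull ℝ S hb)
      rw [← hwapp b, h] at h2
      simp only [inner_zero_left] at h2
      linarith
    refine ⟨-(‖wv‖⁻¹ • wv), ?_, ?_⟩
    · rw [norm_neg, norm_smul, norm_inv, norm_norm]
      exact le_of_eq (inv_mul_cancel₀ (norm_ne_zero_iff.2 hwv0))
    · intro i hi
      have hmem : gradient (g i t) x ∈ convexHull ℝ S :=
        subset_convexHull ℝ S ⟨i, hi, rfl⟩
      have h2 := hub _ hmem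
      rw [← hwapp] at h2
      rw [inner_neg_right, real_inner_smul_right, real_inner_comm]
      have hn : 0 < ‖wv‖⁻¹ := by
        rw [inv_pos]
        exact norm_pos_iff.2 hwv0
      have : 0 < ⟪wv, gradient (g i t) x⟫ := lt_trans hfu h2
      nlinarith
  -- the compact set Q
  set D : Set (ℝ × EuclideanSpace ℝ (Fin d)) := Icc (0:ℝ) T ×ˢ univ with hD
  have hDclosed : IsClosed D := isClosed_Icc.prod isClosed_univ
  set Q : Set (ℝ × EuclideanSpace ℝ (Fin d)) := {p | p.1 ∈ Icc (0:ℝ) T ∧ p.2 ∈ Csub g p.1 ∧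
    (Iactive g ε p.1 p.2).Nonempty} with hQdef
  have hQD : Q ⊆ D := fun p hp => ⟨hp.1, mem_univ _⟩
  have hQclosed : IsClosed Q := by
    have hQeq : Q = (⋂ i, D ∩ {p | g i p.1 p.2 ≤ 0}) ∩
        (⋃ i, D ∩ {p | g i p.1 p.2 ∈ Icc (-ε) 0}) := by
      ext p
      simp only [hQdef, mem_setOf_eq, mem_inter_iff, mem_iInter, mem_iUnion, hD,
        Set.mem_prod, mem_univ, and_true, Csub, Iactive, Set.Nonempty, mem_Icc]
      constructor
      · rintro ⟨h1, h2, i, hi1, hi2⟩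
        exact ⟨fun j => ⟨h1, h2 j⟩, i, h1, hi1, hi2⟩
      · rintro ⟨h1, i, hi0, hi1, hi2⟩
        exact ⟨hi0, fun j => (h1 j).2, i, hi1, hi2⟩
    rw [hQeq]
    refine IsClosed.inter (isClosed_iInter fun i => ?_) (isClosed_iUnion_of_finite fun i => ?_)
    · exact (hg_cont i).preimage_isClosed_of_isClosed hDclosed isClosed_Iic
    · exact (hg_cont i).preimage_isClosed_of_isClosed hDclosed isClosed_Icc
  have hQcomp : IsCompact Q := Metric.isCompact_of_isClosed_isBounded hQclosed hQbdd
  -- Claim A : uniform direction of descent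
  have claimA : ∃ δ > 0, ∀ t x, (t, x) ∈ Q → ∃ v : EuclideanSpace ℝ (Fin d), ‖v‖ ≤ 1 ∧
      ∀ i ∈ Iactive g ε t x, ⟪gradient (g i t) x, v⟫ ≤ -δ := by
    have key : ∀ p : ℝ × EuclideanSpace ℝ (Fin d), p ∈ Q → ∃ δp > (0:ℝ),
        ∃ v : EuclideanSpace ℝ (Fin d), ‖v‖ ≤ 1 ∧
        {q : ℝ × EuclideanSpace ℝ (Fin d) | q ∈ D → ∀ i ∈ Iactive g ε q.1 q.2,
          ⟪gradient (g i q.1) q.2, v⟫ ≤ -δp} ∈ nhds p := by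
      intro p hp
      obtain ⟨v, hv1, hvneg⟩ := gordan p.1 hp.1 p.2 hp.2.1 hp.2.2
      have hAne : ((Set.toFinite (Iactive g ε p.1 p.2)).toFinset).Nonempty := by
        rw [Set.Finite.toFinset_nonempty]
        exact hp.2.2
      obtain ⟨c, hc⟩ : ∃ c : ℝ, c = ((Set.toFinite (Iactive g ε p.1 p.2)).toFinset).sup' hAne
          (fun i => ⟪gradient (g i p.1) p.2, v⟫) := ⟨_, rfl⟩
      have hcneg : c < 0 := by
        rw [hc, Finset.sup'_lt_iff]
        intro i hi
        exact hvneg i ((Set.Finite.mem_toFinset _).1 hi)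
      refine ⟨-c/2, by linarith, v, hv1, ?_⟩
      have hev : ∀ i : Fin m, ∀ᶠ q in nhdsWithin p D,
          (i ∈ Iactive g ε p.1 p.2 → ⟪gradient (g i q.1) q.2, v⟫ < -(-c/2)) ∧
          (i ∉ Iactive g ε p.1 p.2 → g i q.1 q.2 < -ε) := by
        intro i
        by_cases hi : i ∈ Iactive g ε p.1 p.2
        · have hc1 : ⟪gradient (g i p.1) p.2, v⟫ < -(-c/2) := by
            have hle : ⟪gradient (g i p.1) p.2, v⟫ ≤ c := by
              rw [hc]
              exact Finset.le_sup' (f := fun i => ⟪gradient (g i p.1) p.2, v⟫)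
                ((Set.Finite.mem_toFinset _).2 hi)
            linarith
          have hcont : ContinuousWithinAt
              (fun q : ℝ × EuclideanSpace ℝ (Fin d) => ⟪gradient (g i q.1) q.2, v⟫) D p :=
            ((hgrad_cont i).continuousWithinAt (hQD hp)).inner continuousWithinAt_const
          filter_upwards [hcont.eventually_lt_const hc1] with q hq
          exact ⟨fun _ => hq, fun h => absurd hi h⟩
        · have hgc : g i p.1 p.2 < -ε := by
            have h1 := hp.2.1 i
            by_contra hcon
            push_neg at hcon
            exact hi ⟨hcon, h1⟩
          have hcont : ContinuousWithinAt
              (fun q : ℝ × EuclideanSpace ℝ (Fin d) => g i q.1 q.2) D p :=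
            (hg_cont i).continuousWithinAt (hQD hp)
          filter_upwards [hcont.eventually_lt_const hgc] with q hq
          exact ⟨fun h => absurd h hi, fun _ => hq⟩
      have h2 := eventually_nhdsWithin_iff.1 (Filter.eventually_all.2 hev)
      have h3 : ∀ᶠ q in nhds p, q ∈ D → ∀ i ∈ Iactive g ε q.1 q.2,
          ⟪gradient (g i q.1) q.2, v⟫ ≤ -(-c/2) := by
        filter_upwards [h2] with q hq hqD i hiq
        rcases Classical.em (i ∈ Iactive g ε p.1 p.2) with h | h
        · exact ((hq hqD i).1 h).le
        · exact absurd hiq.1 (not_le.2 ((hq hqD i).2 h))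
      exact h3
    choose δp hδp v hv1 hvU using key
    obtain ⟨tf, htf⟩ := hQcomp.elim_nhds_subcover'
      (fun p hp => {q | q ∈ D → ∀ i ∈ Iactive g ε q.1 q.2,
        ⟪gradient (g i q.1) q.2, v p hp⟫ ≤ -(δp p hp)})
      (fun p hp => hvU p hp)
    rcases tf.eq_empty_or_nonempty with htfe | htfne
    · refine ⟨1, one_pos, fun t x hp => ?_⟩
      have := htf hp
      rw [htfe] at this
      simp at this
    · refine ⟨tf.inf' htfne (fun p => δp p.1 p.2), ?_, ?_⟩
      · exact (Finset.lt_inf'_iff _).2 fun p _ => hδp p.1 p.2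
      · intro t x hp
        have hmem := htf hp
        simp only [Set.mem_iUnion] at hmem
        obtain ⟨q, hqtf, hpq⟩ := hmem
        refine ⟨v q.1 q.2, hv1 q.1 q.2, fun i hi => ?_⟩
        have h1 : ⟪gradient (g i t) x, v q.1 q.2⟫ ≤ -(δp q.1 q.2) := by
          simpa using hpq (hQD hp) i (by simpa using hi)
        have hle : tf.inf' htfne (fun p => δp p.1 p.2) ≤ δp q.1 q.2 :=
          Finset.inf'_le _ hqtf
        linarith
  obtain ⟨L0, hL0, η, hη, hLp⟩ := hLip
  -- Claim B : uniform gradient bound near Q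
  have claimB : ∃ G ≥ (1:ℝ), ∀ t x, (t, x) ∈ Q → ∀ y : EuclideanSpace ℝ (Fin d), ‖y - x‖ ≤ η →
      ∀ i, ‖gradient (g i t) y‖ ≤ G := by
    set K := (fun pe : (ℝ × EuclideanSpace ℝ (Fin d)) × EuclideanSpace ℝ (Fin d) =>
      (pe.1.1, pe.1.2 + pe.2)) '' (Q ×ˢ closedBall 0 η) with hK
    have hKcomp : IsCompact K := by
      refine (hQcomp.prod (isCompact_closedBall _ _)).image ?_
      exact (continuous_fst.comp continuous_fst).prodMk
        ((continuous_snd.comp continuous_fst).add continuous_snd)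
    have hKD : K ⊆ D := by
      rintro q ⟨⟨p, e⟩, ⟨hpQ, -⟩, rfl⟩
      exact ⟨hpQ.1, mem_univ _⟩
    have hbd : ∀ i : Fin m, ∃ C : ℝ, ∀ q ∈ K, ‖gradient (g i q.1) q.2‖ ≤ C := fun i =>
      hKcomp.exists_bound_of_continuousOn ((hgrad_cont i).mono hKD)
    choose C hC using hbd
    refine ⟨1 + ∑ i, max (C i) 0,
      le_add_of_nonneg_right (Finset.sum_nonneg fun j _ => le_max_right _ _), ?_⟩
    intro t x hp y hy i
    have hyK : (t, y) ∈ K := by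
      rw [hK]
      refine ⟨((t, x), y - x), ⟨hp, ?_⟩, by simp⟩
      simpa [mem_closedBall, dist_eq_norm] using hy
    have h1 : ‖gradient (g i t) y‖ ≤ C i := by simpa using hC i _ hyK
    have h2 : max (C i) 0 ≤ ∑ j, max (C j) 0 :=
      Finset.single_le_sum (f := fun j => max (C j) 0) (fun j _ => le_max_right _ _)
        (Finset.mem_univ i)
    calc ‖gradient (g i t) y‖ ≤ C i := h1
      _ ≤ max (C i) 0 := le_max_left _ _
      _ ≤ ∑ j, max (C j) 0 := h2
      _ ≤ 1 + ∑ j, max (C j) 0 := by linarith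
  obtain ⟨δ, hδ, hA⟩ := claimA
  obtain ⟨G, hG1, hB⟩ := claimB
  have hG0 : (0:ℝ) < G := lt_of_lt_of_le one_pos hG1
  set ρ : ℝ := min (min (η/2) (δ/(4*L0))) (ε/(2*G)) with hρdef
  have hρ : 0 < ρ := lt_min (lt_min (by positivity) (by positivity)) (by positivity)
  have hρa : ρ ≤ η/2 := (min_le_left _ _).trans (min_le_left _ _)
  have hρb : ρ ≤ δ/(4*L0) := (min_le_left _ _).trans (min_le_right _ _)
  have hρc : ρ ≤ ε/(2*G) := min_le_right _ _
  set r : ℝ := min (ρ/2) (δ*ρ/(8*G)) with hrdef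
  have hr : 0 < r := lt_min (by positivity) (by positivity)
  have hra : r ≤ ρ/2 := min_le_left _ _
  have hrb : r ≤ δ*ρ/(8*G) := min_le_right _ _
  have h2rG : 2*r*G ≤ δ*ρ/4 := by
    have h1 : r * (8*G) ≤ δ*ρ := (le_div_iff₀ (by positivity)).1 hrb
    linarith
  have h4L : ρ * (4*L0) ≤ δ := (le_div_iff₀ (by positivity)).1 hρb
  have h2G : ρ * (2*G) ≤ ε := (le_div_iff₀ (by positivity)).1 hρc
  refine ⟨r, hr, ρ/r, by positivity, ?_⟩
  intro t ht x hx
  have hgc : ∀ i, Continuous (g i t) := fun i =>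
    continuous_iff_continuousAt.2 fun y => (hdiff i t ht y).continuousAt
  have hCclosed : IsClosed (Csub g t) := by
    have hCeq : Csub g t = ⋂ i, (g i t) ⁻¹' (Iic 0) := by
      ext y; simp [Csub, mem_iInter]
    rw [hCeq]
    exact isClosed_iInter fun i => isClosed_Iic.preimage (hgc i)
  have hxC : x ∈ Csub g t := by
    have h1 := frontier_subset_closure (s := Csub g t) hx
    rwa [hCclosed.closure_eq] at h1
  have hact : ∃ j, g j t x = 0 := by
    by_contra hcon
    push_neg at hcon
    have hlt : ∀ j, g j t x < 0 := fun j => lt_of_le_of_ne (hxC j) (hcon j)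
    have hO : x ∈ interior (Csub g t) := by
      have hOopen : IsOpen (⋂ j, (g j t) ⁻¹' (Iio 0)) :=
        isOpen_iInter_of_finite fun j => isOpen_Iio.preimage (hgc j)
      have hsub : (⋂ j, (g j t) ⁻¹' (Iio 0)) ⊆ Csub g t := fun y hy j =>
        le_of_lt (mem_iInter.1 hy j)
      exact interior_maximal hsub hOopen (mem_iInter.2 hlt)
    rw [hCclosed.frontier_eq] at hx
    exact hx.2 hO
  obtain ⟨j, hj⟩ := hact
  have hjact : j ∈ Iactive g ε t x := by
    simp only [Iactive, mem_setOf_eq, hj]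
    exact ⟨by linarith, le_rfl⟩
  have hpQ : (t, x) ∈ Q := ⟨ht, hxC, ⟨j, hjact⟩⟩
  obtain ⟨v, hv1, hvneg⟩ := hA t x hpQ
  refine ⟨x + ρ • v, ?_, ?_⟩
  · -- the convex hull inclusion
    intro y hy
    rw [singleton_union, convexHull_insert (nonempty_ball.2 (by positivity)),
      (convex_ball _ _).convexHull_eq, mem_convexJoin] at hy
    obtain ⟨a0, ha0, w, hw, hseg⟩ := hy
    rw [mem_singleton_iff] at ha0
    rw [ha0] at hseg
    obtain ⟨a, b, ha, hb, hab, hy'⟩ := hseg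
    have hb1 : b ≤ 1 := by linarith
    have hwz : ‖w - (x + ρ • v)‖ < 2*r := by
      rw [mem_ball, dist_eq_norm] at hw
      exact hw
    have hyx : y - x = b • (w - x) := by
      rw [← hy']
      have : a = 1 - b := by linarith
      rw [this]
      module
    have hwx : w - x = ρ • v + (w - (x + ρ • v)) := by module
    have hvn : ‖ρ • v‖ ≤ ρ := by
      rw [norm_smul, Real.norm_eq_abs, abs_of_pos hρ]
      nlinarith
    have hwxn : ‖w - x‖ ≤ ρ + 2*r := by
      rw [hwx]
      refine (norm_add_le _ _).trans ?_
      linarith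
    have hun : ‖y - x‖ ≤ b*(ρ + 2*r) := by
      rw [hyx, norm_smul, Real.norm_eq_abs, abs_of_nonneg hb]
      exact mul_le_mul_of_nonneg_left hwxn hb
    have h2r : 2*r ≤ ρ := by linarith
    have hun2 : ‖y - x‖ ≤ 2*ρ := by nlinarith
    have hyeq : y = x + (y - x) := by abel
    show ∀ i, g i t y ≤ 0
    intro i
    by_cases hiact : i ∈ Iactive g ε t x
    · -- active constraint : descent lemma
      have hgradb : ‖gradient (g i t) x‖ ≤ G := by
        have := hB t x hpQ x (by simp; positivity) i
        simpa using this
      have hlipseg : ∀ s ∈ Icc (0:ℝ) 1,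
          ‖gradient (g i t) (x + s • (y - x)) - gradient (g i t) x‖ ≤ L0 * ‖s • (y - x)‖ := by
        intro s hs
        have habs : |s| ≤ 1 := abs_le.2 ⟨by linarith [hs.1], hs.2⟩
        have hmem1 : x + s • (y - x) ∈
            Csub g t + closedBall (0 : EuclideanSpace ℝ (Fin d)) η := by
          refine Set.add_mem_add hxC ?_
          rw [mem_closedBall_zero_iff, norm_smul, Real.norm_eq_abs]
          nlinarith [norm_nonneg (y - x)]
        have hmem2 : x ∈ Csub g t + closedBall (0 : EuclideanSpace ℝ (Fin d)) η := by
          have h0m : (0 : EuclideanSpace ℝ (Fin d)) ∈ closedBall 0 η := by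
            rw [mem_closedBall_zero_iff, norm_zero]; linarith
          simpa using Set.add_mem_add hxC h0m
        have := hLp t ht i _ hmem1 _ hmem2
        simpa [add_sub_cancel_left] using this
      have hdesc := descent_lemma' (g i t) (hdiff i t ht) x (y - x) L0 hlipseg
      rw [← hyeq] at hdesc
      have hinner : ⟪gradient (g i t) x, y - x⟫ ≤ b * (ρ * (-δ) + 2*r*G) := by
        rw [hyx, real_inner_smul_right, hwx, inner_add_right, real_inner_smul_right]
        have h1 : ⟪gradient (g i t) x, v⟫ ≤ -δ := hvneg i hiact
        have h2 : ⟪gradient (g i t) x, w - (x + ρ • v)⟫ ≤ G * (2*r) := by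
          refine (real_inner_le_norm _ _).trans ?_
          nlinarith [norm_nonneg (gradient (g i t) x), norm_nonneg (w - (x + ρ • v))]
        have h3 : ρ * ⟪gradient (g i t) x, v⟫ ≤ ρ * (-δ) :=
          mul_le_mul_of_nonneg_left h1 hρ.le
        nlinarith
      have h5 : ‖y - x‖ ≤ b*(2*ρ) := by
        have := mul_le_mul_of_nonneg_left (show ρ+2*r ≤ 2*ρ by linarith) hb
        nlinarith [hun]
      have hsq : ‖y - x‖^2 ≤ b * (2*ρ)^2 := by
        have h6 : ‖y - x‖^2 ≤ (b*(2*ρ))^2 := by nlinarith [norm_nonneg (y - x)]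
        have h7 : b^2 ≤ b := by nlinarith
        nlinarith [h6, h7, sq_nonneg (2*ρ)]
      have hgx : g i t x ≤ 0 := hiact.2
      have hquad : L0/2 * ‖y - x‖^2 ≤ L0/2 * (b * (2*ρ)^2) :=
        mul_le_mul_of_nonneg_left hsq (by positivity)
      have hfinal : L0/2 * (b * (2*ρ)^2) ≤ b * (δ*ρ/2) := by
        have := mul_le_mul_of_nonneg_right h4L (mul_nonneg hρ.le hb)
        nlinarith
      nlinarith [hdesc, hinner, hquad, hfinal, h2rG, mul_nonneg hb (mul_pos hδ hρ).le]
    · -- inactive constraint : simple Lipschitz bound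
      have hgxlt : g i t x < -ε := by
        have h1 := hxC i
        by_contra hcon
        push_neg at hcon
        exact hiact ⟨hcon, h1⟩
      have hbound : ∀ p ∈ closedBall x η, ‖fderiv ℝ (g i t) p‖ ≤ G := by
        intro p hp
        rw [← norm_gradient_eq_fderiv']
        refine hB t x hpQ p ?_ i
        rwa [mem_closedBall, dist_eq_norm] at hp
      have hyball : y ∈ closedBall x η := by
        rw [mem_closedBall, dist_eq_norm]
        linarith
      have hxball : x ∈ closedBall x η := mem_closedBall_self hη.le
      have hmvt := (convex_closedBall x η).norm_image_sub_le_of_norm_fderiv_le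
        (fun p _ => hdiff i t ht p) hbound hxball hyball
      rw [Real.norm_eq_abs] at hmvt
      have h1 : g i t y - g i t x ≤ G * ‖y - x‖ := (le_abs_self _).trans hmvt
      have h2 : G * ‖y - x‖ ≤ ε := by nlinarith
      linarith
  · -- the distance bound
    have heq : ‖(x + ρ • v) - x‖ = ρ * ‖v‖ := by
      rw [add_sub_cancel_left, norm_smul, Real.norm_eq_abs, abs_of_pos hρ]
    rw [heq, div_mul_cancel₀ _ (ne_of_gt hr)]
    nlinarith
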